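/- Let K be a field of characteristic ≠ 2, let B := K[x,y]/(x,y)² be the quotient of the polynomial ring K[x,y] by the square of the ideal (x,y), and let ψ̄ : B³ → B³ be the B-linear map given by the skew-symmetric matrix with rows (0, 0, x), (0, 0, y), (−x, −y, 0) (entries taken in B). Then the image of ψ̄ has dimension 3 as a K-vector space; in particular this dimension is odd. -/

import Mathlib

open Matrix MvPolynomial

set_option maxHeartbeats 2000000
set_option synthInstance.maxHeartbeats 1000000

section Aux

variable {K : Type*} [Field K]

private noncomputable abbrev Iid (K : Type*) [Field K] : Ideal (MvPolynomial (Fin 2) K) :=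
  Ideal.span {MvPolynomial.X 0, MvPolynomial.X 1}

private lemma constCoeff_of_mem {p : MvPolynomial (Fin 2) K} (hp : p ∈ Iid K) :
    constantCoeff p = 0 := by
  have h : Iid K ≤ RingHom.ker (constantCoeff (σ := Fin 2) (R := K)) := by
    rw [Ideal.span_le]
    rintro q (rfl | rfl) <;> simp [RingHom.mem_ker]
  exact h hp

private lemma coeff_single_of_mem_sq {p : MvPolynomial (Fin 2) K} (hp : p ∈ Iid K ^ 2)
    (i : Fin 2) : coeff (Finsupp.single i 1) p = 0 := by
  rw [pow_two] at hp
  refine Submodule.mul_induction_on hp (fun a ha b hb => ?_) (fun a b ha hb => by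
    simp [coeff_add, ha, hb])
  rw [coeff_mul]
  refine Finset.sum_eq_zero fun uv huv => ?_
  rw [Finset.HasAntidiagonal.mem_antidiagonal] at huv
  rcases Nat.eq_zero_or_pos (uv.1 i) with h0 | h1
  · have hu : uv.1 = 0 := by
      ext j
      have hj' := DFunLike.congr_fun huv j
      simp only [Finsupp.add_apply, Finsupp.single_apply] at hj'
      rcases eq_or_ne j i with rfl | hj
      · simpa using h0
      · simp only [Finsupp.coe_zero, Pi.zero_apply]
        rw [if_neg (fun h : i = j => hj h.symm)] at hj'
        omega
    have : coeff uv.1 a = 0 := by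
      rw [hu]; exact constCoeff_of_mem ha
    simp [this]
  · have hv : uv.2 = 0 := by
      have hii := DFunLike.congr_fun huv i
      simp only [Finsupp.add_apply, Finsupp.single_apply, if_pos rfl] at hii
      ext j
      have hj' := DFunLike.congr_fun huv j
      simp only [Finsupp.add_apply, Finsupp.single_apply] at hj'
      rcases eq_or_ne j i with rfl | hj
      · simp only [Finsupp.coe_zero, Pi.zero_apply]
        simp only [eq_self_iff_true, if_true] at hj'
        omega
      · simp only [Finsupp.coe_zero, Pi.zero_apply]
        rw [if_neg (fun h : i = j => hj h.symm)] at hj'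
        omega
    have : coeff uv.2 b = 0 := by
      rw [hv]; exact constCoeff_of_mem hb
    simp [this]

private lemma mk_X_mul_mk_X (i j : Fin 2) :
    (Ideal.Quotient.mk (Iid K ^ 2)) (MvPolynomial.X i) *
      (Ideal.Quotient.mk (Iid K ^ 2)) (MvPolynomial.X j) = 0 := by
  rw [← _root_.map_mul, Ideal.Quotient.eq_zero_iff_mem, pow_two]
  have hi : (MvPolynomial.X i : MvPolynomial (Fin 2) K) ∈ Iid K := by
    apply Ideal.subset_span; fin_cases i <;> simp
  have hj : (MvPolynomial.X j : MvPolynomial (Fin 2) K) ∈ Iid K := by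
    apply Ideal.subset_span; fin_cases j <;> simp
  exact Ideal.mul_mem_mul hi hj

private lemma decompose (p : MvPolynomial (Fin 2) K) :
    ∃ a b c : K, (Ideal.Quotient.mk (Iid K ^ 2)) p =
      a • 1 + b • (Ideal.Quotient.mk (Iid K ^ 2)) (MvPolynomial.X 0)
        + c • (Ideal.Quotient.mk (Iid K ^ 2)) (MvPolynomial.X 1) := by
  induction p using MvPolynomial.induction_on with
  | C a =>
      refine ⟨a, 0, 0, ?_⟩
      have h1 : (Ideal.Quotient.mk (Iid K ^ 2)) (MvPolynomial.C a)
          = algebraMap K _ a := rfl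
      rw [h1, Algebra.algebraMap_eq_smul_one]
      simp
  | add p q hp hq =>
      obtain ⟨a, b, c, hp⟩ := hp
      obtain ⟨a', b', c', hq⟩ := hq
      exact ⟨a + a', b + b', c + c', by rw [map_add, hp, hq]; module⟩
  | mul_X p i hp =>
      obtain ⟨a, b, c, hp⟩ := hp
      have : (Ideal.Quotient.mk (Iid K ^ 2)) (p * MvPolynomial.X i) =
          a • (Ideal.Quotient.mk (Iid K ^ 2)) (MvPolynomial.X i) := by
        rw [_root_.map_mul, hp]
        simp only [add_mul, smul_mul_assoc, one_mul, mk_X_mul_mk_X, smul_zero,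
          add_zero]
      fin_cases i
      · exact ⟨0, a, 0, by simpa using this⟩
      · exact ⟨0, 0, a, by simpa using this⟩

private lemma mul_X_eq (b : MvPolynomial (Fin 2) K ⧸ (Iid K ^ 2)) :
    ∃ a : K, b * (Ideal.Quotient.mk (Iid K ^ 2)) (MvPolynomial.X 0) =
        a • (Ideal.Quotient.mk (Iid K ^ 2)) (MvPolynomial.X 0) ∧
      b * (Ideal.Quotient.mk (Iid K ^ 2)) (MvPolynomial.X 1) =
        a • (Ideal.Quotient.mk (Iid K ^ 2)) (MvPolynomial.X 1) := by
  obtain ⟨p, rfl⟩ := Ideal.Quotient.mk_surjective b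
  obtain ⟨a, b', c, hp⟩ := decompose p
  refine ⟨a, ?_, ?_⟩ <;>
    · rw [hp]
      simp only [add_mul, smul_mul_assoc, one_mul, mk_X_mul_mk_X, smul_zero, add_zero]

private lemma indep_xy (a b : K)
    (h : a • (Ideal.Quotient.mk (Iid K ^ 2)) (MvPolynomial.X 0)
        + b • (Ideal.Quotient.mk (Iid K ^ 2)) (MvPolynomial.X 1) = 0) :
    a = 0 ∧ b = 0 := by
  have hmem : (a • MvPolynomial.X 0 + b • MvPolynomial.X 1 : MvPolynomial (Fin 2) K)
      ∈ Iid K ^ 2 := by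
    rw [← Ideal.Quotient.eq_zero_iff_mem]
    rw [map_add]
    have e0 : (Ideal.Quotient.mk (Iid K ^ 2)) (a • MvPolynomial.X 0 : MvPolynomial (Fin 2) K)
        = a • (Ideal.Quotient.mk (Iid K ^ 2)) (MvPolynomial.X 0) := by
      rw [Algebra.smul_def, _root_.map_mul,
        show (Ideal.Quotient.mk (Iid K ^ 2)) ((algebraMap K (MvPolynomial (Fin 2) K)) a)
          = algebraMap K _ a from rfl, ← Algebra.smul_def]
    have e1 : (Ideal.Quotient.mk (Iid K ^ 2)) (b • MvPolynomial.X 1 : MvPolynomial (Fin 2) K)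
        = b • (Ideal.Quotient.mk (Iid K ^ 2)) (MvPolynomial.X 1) := by
      rw [Algebra.smul_def, _root_.map_mul,
        show (Ideal.Quotient.mk (Iid K ^ 2)) ((algebraMap K (MvPolynomial (Fin 2) K)) b)
          = algebraMap K _ b from rfl, ← Algebra.smul_def]
    rw [e0, e1, h]
  constructor
  · have := coeff_single_of_mem_sq hmem 0
    simpa [coeff_smul, coeff_X', Finsupp.single_eq_single_iff] using this
  · have := coeff_single_of_mem_sq hmem 1
    simpa [coeff_smul, coeff_X', Finsupp.single_eq_single_iff] using this

end Aux

theorem finrank_range_example_eq_three_and_odd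
    (K : Type*) [Field K] (hK : ringChar K ≠ 2)
    (x y : MvPolynomial (Fin 2) K ⧸
      ((Ideal.span {MvPolynomial.X 0, MvPolynomial.X 1} :
          Ideal (MvPolynomial (Fin 2) K)) ^ 2))
    (hx : x = Ideal.Quotient.mk _ (MvPolynomial.X 0))
    (hy : y = Ideal.Quotient.mk _ (MvPolynomial.X 1))
    (M : Matrix (Fin 3) (Fin 3)
      (MvPolynomial (Fin 2) K ⧸
        ((Ideal.span {MvPolynomial.X 0, MvPolynomial.X 1} :
            Ideal (MvPolynomial (Fin 2) K)) ^ 2)))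
    (hM : M = !![0, 0, x; 0, 0, y; -x, -y, 0]) :
    Module.finrank K
      (Submodule.restrictScalars K (LinearMap.range (Matrix.toLin' M))) = 3 ∧
    Odd (Module.finrank K
      (Submodule.restrictScalars K (LinearMap.range (Matrix.toLin' M)))) := by
  subst hx hy hM
  set B := MvPolynomial (Fin 2) K ⧸
      ((Ideal.span {MvPolynomial.X 0, MvPolynomial.X 1} :
          Ideal (MvPolynomial (Fin 2) K)) ^ 2) with hB
  set x : B := Ideal.Quotient.mk _ (MvPolynomial.X 0) with hxdef
  set y : B := Ideal.Quotient.mk _ (MvPolynomial.X 1) with hydef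
  set v : Fin 3 → (Fin 3 → B) := ![![0, 0, -x], ![0, 0, -y], ![x, y, 0]] with hv
  set M : Matrix (Fin 3) (Fin 3) B := !![0, 0, x; 0, 0, y; -x, -y, 0] with hMdef
  -- the key submodule identity
  have hrange : Submodule.restrictScalars K (LinearMap.range (Matrix.toLin' M))
      = Submodule.span K (Set.range v) := by
    apply le_antisymm
    · rintro u ⟨w, rfl⟩
      rw [Matrix.toLin'_apply]
      obtain ⟨a0, h00, _⟩ := mul_X_eq (w 0)
      obtain ⟨a1, _, h11⟩ := mul_X_eq (w 1)
      obtain ⟨a2, h20, h21⟩ := mul_X_eq (w 2)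
      have heq : M.mulVec w = a0 • v 0 + a1 • v 1 + a2 • v 2 := by
        funext i
        fin_cases i
        · show M.mulVec w 0 = (a0 • v 0 + a1 • v 1 + a2 • v 2) 0
          have hl : M.mulVec w 0 = a2 • x := by
            simp [Matrix.mulVec, dotProduct, Fin.sum_univ_three, hMdef,
              mul_comm x (w 2), h20]
            exact h20
          rw [hl]
          simp [hv]
        · show M.mulVec w 1 = (a0 • v 0 + a1 • v 1 + a2 • v 2) 1
          have hl : M.mulVec w 1 = a2 • y := by
            simp [Matrix.mulVec, dotProduct, Fin.sum_univ_three, hMdef,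
              mul_comm y (w 2), h21]
            exact h21
          rw [hl]
          simp [hv]
        · show M.mulVec w 2 = (a0 • v 0 + a1 • v 1 + a2 • v 2) 2
          have hl : M.mulVec w 2 = a0 • (-x) + a1 • (-y) := by
            have h1 : M.mulVec w 2 = -(w 0 * x) + -(w 1 * y) := by
              simp only [Matrix.mulVec, dotProduct, Fin.sum_univ_three, hMdef]
              norm_num
              simp
              ring
            rw [h1, h00, h11]
            module
          rw [hl]
          simp [hv]
      rw [heq]
      exact Submodule.add_mem _ (Submodule.add_mem _
        (Submodule.smul_mem _ _ (Submodule.subset_span ⟨0, rfl⟩))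
        (Submodule.smul_mem _ _ (Submodule.subset_span ⟨1, rfl⟩)))
        (Submodule.smul_mem _ _ (Submodule.subset_span ⟨2, rfl⟩))
    · rw [Submodule.span_le]
      rintro _ ⟨i, rfl⟩
      fin_cases i
      · refine ⟨Pi.single 0 1, ?_⟩
        rw [Matrix.toLin'_apply, Matrix.mulVec_single]
        funext j
        fin_cases j <;> simp [hMdef, hv]
      · refine ⟨Pi.single 1 1, ?_⟩
        rw [Matrix.toLin'_apply, Matrix.mulVec_single]
        funext j
        fin_cases j <;> simp [hMdef, hv]
      · refine ⟨Pi.single 2 1, ?_⟩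
        rw [Matrix.toLin'_apply, Matrix.mulVec_single]
        funext j
        fin_cases j <;> simp [hMdef, hv]
  have hli : LinearIndependent K v := by
    rw [Fintype.linearIndependent_iff]
    intro g hg
    have h0 := congrFun hg 0
    have h2 := congrFun hg 2
    simp only [Fin.sum_univ_three, Pi.add_apply, Pi.smul_apply, hv,
      Matrix.cons_val_zero, Matrix.cons_val_one, Matrix.head_cons,
      Matrix.cons_val_two, Matrix.tail_cons, Pi.zero_apply,
      smul_zero, zero_add, add_zero, smul_neg] at h0 h2
    have hg2 : g 2 = 0 := by
      have := indep_xy (g 2) 0 (by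
        rw [zero_smul, add_zero]
        exact h0)
      exact this.1
    have hg01 := indep_xy (-(g 0)) (-(g 1)) (by
      rw [neg_smul, neg_smul]; exact h2)
    intro i
    fin_cases i
    · simpa using neg_eq_zero.mp hg01.1
    · simpa using neg_eq_zero.mp hg01.2
    · exact hg2
  have hfin : Module.finrank K
      (Submodule.restrictScalars K (LinearMap.range (Matrix.toLin' M))) = 3 := by
    rw [hrange, finrank_span_eq_card hli]
    simp
  exact ⟨hfin, by rw [hfin]; exact ⟨1, by norm_num⟩⟩
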